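/- If a pure state |ψ⟩ on n qubits satisfies both Σ_P ⟨ψ|P|ψ⟩^{2α} = d and Σ_P ⟨ψ|P|ψ⟩^{2} = d for some α > 1, then the density matrix |ψ⟩⟨ψ| equals (1/d) Σ_{P∈S} φ_P P for some set S of d Pauli strings and signs φ_P ∈ {−1,+1}, i.e., |ψ⟩ is a stabilizer state. -/

import Mathlib

open Matrix BigOperators

/-- If a pure state |ψ⟩ on n qubits satisfies ∑_P ⟨ψ|P|ψ⟩^{2α} = d and
∑_P ⟨ψ|P|ψ⟩² = d for some α > 1, then |ψ⟩⟨ψ| = d⁻¹ ∑_{P∈S} φ_P P for a set S of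
d Pauli strings and signs φ_P = ±1, i.e. |ψ⟩ is a stabilizer state. -/
theorem stmt_1 (n : ℕ) (hn : 1 ≤ n) (d : ℕ) (hd : d = 2 ^ n)
    (P : Fin (d ^ 2) → Matrix (Fin d) (Fin d) ℂ)
    (hherm : ∀ i, (P i).IsHermitian)
    (hsq : ∀ i, P i * P i = 1)
    (horth : ∀ i j, Matrix.trace (P i * P j) = if i = j then (d : ℂ) else 0)
    (ψ : Fin d → ℂ) (hψ : star ψ ⬝ᵥ ψ = 1)
    (ρ : Matrix (Fin d) (Fin d) ℂ) (hρ : ρ = Matrix.vecMulVec ψ (star ψ))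
    (e : Fin (d ^ 2) → ℝ) (he : ∀ i, Matrix.trace (P i * ρ) = (e i : ℂ))
    (hexp : ρ = (d : ℂ)⁻¹ • ∑ i, (e i : ℂ) • P i)
    (α : ℝ) (hα : 1 < α)
    (hsum2α : ∑ i, ((e i) ^ 2) ^ α = (d : ℝ))
    (hsum2 : ∑ i, (e i) ^ 2 = (d : ℝ)) :
    ∃ S : Finset (Fin (d ^ 2)), S.card = d ∧
      ∃ φ : Fin (d ^ 2) → ℝ, (∀ i ∈ S, φ i = 1 ∨ φ i = -1) ∧
        ρ = (d : ℂ)⁻¹ • ∑ i ∈ S, (φ i : ℂ) • P i := by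
  -- Step 1: each |e i| ≤ 1 (Cauchy–Schwarz)
  have hnormψ : ‖(WithLp.equiv 2 (Fin d → ℂ)).symm ψ‖ = 1 := by
    have h1 : @inner ℂ (EuclideanSpace ℂ (Fin d)) _
        ((WithLp.equiv 2 _).symm ψ) ((WithLp.equiv 2 _).symm ψ) = 1 := by
      rw [show (1 : ℂ) = star ψ ⬝ᵥ ψ from hψ.symm]
      simp [-inner_self_eq_norm_sq_to_K, PiLp.inner_apply, RCLike.inner_apply, dotProduct, mul_comm]
    have h2 := inner_self_eq_norm_sq (𝕜 := ℂ) (E := EuclideanSpace ℂ (Fin d))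
      ((WithLp.equiv 2 _).symm ψ)
    rw [h1] at h2
    simp only [RCLike.one_re] at h2
    nlinarith [norm_nonneg ((WithLp.equiv 2 (Fin d → ℂ)).symm ψ)]
  have hbound : ∀ i, |e i| ≤ 1 := by
    intro i
    set v : Fin d → ℂ := (P i) *ᵥ ψ with hv
    have hvv : star v ⬝ᵥ v = 1 := by
      rw [hv, Matrix.star_mulVec, ← Matrix.dotProduct_mulVec, Matrix.mulVec_mulVec,
        (hherm i).eq, hsq i, Matrix.one_mulVec, hψ]
    have hnormv : ‖(WithLp.equiv 2 (Fin d → ℂ)).symm v‖ = 1 := by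
      have h1 : @inner ℂ (EuclideanSpace ℂ (Fin d)) _
          ((WithLp.equiv 2 _).symm v) ((WithLp.equiv 2 _).symm v) = 1 := by
        rw [show (1 : ℂ) = star v ⬝ᵥ v from hvv.symm]
        simp [-inner_self_eq_norm_sq_to_K, PiLp.inner_apply, RCLike.inner_apply, dotProduct, mul_comm]
      have h2 := inner_self_eq_norm_sq (𝕜 := ℂ) (E := EuclideanSpace ℂ (Fin d))
        ((WithLp.equiv 2 _).symm v)
      rw [h1] at h2
      simp only [RCLike.one_re] at h2
      nlinarith [norm_nonneg ((WithLp.equiv 2 (Fin d → ℂ)).symm v)]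
    have htr : (e i : ℂ) = star ψ ⬝ᵥ v := by
      rw [← he i, hρ]
      simp only [Matrix.trace, Matrix.diag, Matrix.mul_apply, Matrix.vecMulVec_apply,
        hv, Matrix.mulVec, dotProduct, Pi.star_apply, Finset.mul_sum]
      congr 1; ext j; congr 1; ext k; ring
    have hinner : @inner ℂ (EuclideanSpace ℂ (Fin d)) _
        ((WithLp.equiv 2 _).symm ψ) ((WithLp.equiv 2 _).symm v) = (e i : ℂ) := by
      rw [htr]
      simp [PiLp.inner_apply, RCLike.inner_apply, dotProduct, mul_comm]
    have hcs := @norm_inner_le_norm ℂ (EuclideanSpace ℂ (Fin d)) _ _ _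
      ((WithLp.equiv 2 _).symm ψ) ((WithLp.equiv 2 _).symm v)
    rw [hinner, hnormψ, hnormv] at hcs
    simpa using hcs
  -- Step 2: (e i)² ∈ {0, 1}
  have hsqle : ∀ i, e i ^ 2 ≤ 1 := by
    intro i
    have := hbound i
    nlinarith [abs_nonneg (e i), sq_abs (e i)]
  have hptle : ∀ i : Fin (d ^ 2), (e i ^ 2) ^ α ≤ e i ^ 2 := by
    intro i
    rcases eq_or_lt_of_le (sq_nonneg (e i)) with h0 | h0
    · rw [← h0, Real.zero_rpow (by linarith : α ≠ 0)]
    · calc (e i ^ 2) ^ α ≤ (e i ^ 2) ^ (1 : ℝ) :=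
            Real.rpow_le_rpow_of_exponent_ge h0 (hsqle i) (le_of_lt hα)
        _ = e i ^ 2 := Real.rpow_one _
  have heq : ∀ i : Fin (d ^ 2), (e i ^ 2) ^ α = e i ^ 2 := by
    have hsums : ∑ i, e i ^ 2 = ∑ i, (e i ^ 2) ^ α := by rw [hsum2, hsum2α]
    intro i
    have := (Finset.sum_eq_sum_iff_of_le (fun i _ => hptle i)).mp hsums.symm i (by simp)
    linarith
  have h01 : ∀ i, e i ^ 2 = 0 ∨ e i ^ 2 = 1 := by
    intro i
    rcases eq_or_lt_of_le (sq_nonneg (e i)) with h0 | h0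
    · exact Or.inl h0.symm
    rcases eq_or_lt_of_le (hsqle i) with h1 | h1
    · exact Or.inr h1
    · exfalso
      have : (e i ^ 2) ^ α < (e i ^ 2) ^ (1 : ℝ) :=
        Real.rpow_lt_rpow_of_exponent_gt h0 h1 hα
      rw [Real.rpow_one, heq i] at this
      exact lt_irrefl _ this
  -- Step 3: the set S
  set S : Finset (Fin (d ^ 2)) := Finset.univ.filter (fun i => e i ^ 2 = 1) with hS
  have hcard : S.card = d := by
    have : ∑ i, e i ^ 2 = (S.card : ℝ) := by
      rw [← Finset.sum_filter_add_sum_filter_not Finset.univ (fun i => e i ^ 2 = 1)]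
      have h1 : ∑ i ∈ Finset.univ.filter (fun i => e i ^ 2 = 1), e i ^ 2 = (S.card : ℝ) := by
        rw [Finset.sum_congr rfl (fun i hi => (Finset.mem_filter.mp hi).2)]
        simp [hS]
      have h2 : ∑ i ∈ Finset.univ.filter (fun i => ¬ e i ^ 2 = 1), e i ^ 2 = 0 := by
        apply Finset.sum_eq_zero
        intro i hi
        rcases h01 i with h | h
        · exact h
        · exact absurd h (Finset.mem_filter.mp hi).2
      rw [h1, h2, add_zero]
    rw [hsum2] at this
    exact_mod_cast this.symm
  refine ⟨S, hcard, e, ?_, ?_⟩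
  · intro i hi
    have := (Finset.mem_filter.mp hi).2
    have : e i * e i = 1 := by nlinarith [sq (e i)]
    rcases mul_self_eq_one_iff.mp this with h | h
    · exact Or.inl h
    · exact Or.inr h
  · rw [hexp]
    congr 1
    rw [← Finset.sum_subset (Finset.subset_univ S)]
    intro i _ hi
    have h0 : e i ^ 2 = 0 := by
      rcases h01 i with h | h
      · exact h
      · exact absurd (Finset.mem_filter.mpr ⟨Finset.mem_univ i, h⟩) hi
    have : e i = 0 := by nlinarith
    rw [this]
    simp
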